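/- The category of sets with ⊗ given by cartesian product and ⊕ defined by A⊕B = B if A is empty, A⊕B = A if B is empty, and A⊕B = 1 (a singleton) otherwise, admits the structure of a (non-compact) linearly distributive category; in particular there exist natural linear distribution maps A×(B⊕C) → (A×B)⊕C satisfying the linearly distributive coherences. -/

import Mathlib

open CategoryTheory CategoryTheory.MonoidalCategory

universe u

/-- The data of a linearly distributive category structure on a monoidal category
`(C, ⊗, ⊤)`: a second "par" tensor with unit `⊥`, associativity and unit isomorphisms
(oriented as in Cockett–Pastro), and the two linear distributions. -/
structure LDData (C : Type*) [Category C] [MonoidalCategory C] where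
  par : C → C → C
  parMap : ∀ {X₁ X₂ Y₁ Y₂ : C}, (X₁ ⟶ X₂) → (Y₁ ⟶ Y₂) → (par X₁ Y₁ ⟶ par X₂ Y₂)
  bot : C
  aPar : ∀ X Y Z : C, par X (par Y Z) ≅ par (par X Y) Z
  lPar : ∀ X : C, X ≅ par bot X
  rPar : ∀ X : C, X ≅ par X bot
  dl : ∀ X Y Z : C, X ⊗ par Y Z ⟶ par (X ⊗ Y) Z
  dr : ∀ X Y Z : C, par Y Z ⊗ X ⟶ par Y (Z ⊗ X)

/-- The Cockett–Seely coherence conditions making `D : LDData C` a linearly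
distributive category: functoriality of the par, naturality of all the structure
maps, the monoidal coherences (pentagon and triangle) for the par, and the
coherence conditions relating the linear distributions to the units and
associativities of the two tensors. -/
structure IsLinDistrib {C : Type*} [Category C] [MonoidalCategory C] (D : LDData C) : Prop where
  parMap_id : ∀ X Y : C, D.parMap (𝟙 X) (𝟙 Y) = 𝟙 (D.par X Y)
  parMap_comp : ∀ {X₁ X₂ X₃ Y₁ Y₂ Y₃ : C} (f : X₁ ⟶ X₂) (f' : X₂ ⟶ X₃)
      (g : Y₁ ⟶ Y₂) (g' : Y₂ ⟶ Y₃),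
      D.parMap (f ≫ f') (g ≫ g') = D.parMap f g ≫ D.parMap f' g'
  aPar_natural : ∀ {X X' Y Y' Z Z' : C} (f : X ⟶ X') (g : Y ⟶ Y') (h : Z ⟶ Z'),
      D.parMap f (D.parMap g h) ≫ (D.aPar X' Y' Z').hom =
        (D.aPar X Y Z).hom ≫ D.parMap (D.parMap f g) h
  lPar_natural : ∀ {X Y : C} (f : X ⟶ Y),
      f ≫ (D.lPar Y).hom = (D.lPar X).hom ≫ D.parMap (𝟙 D.bot) f
  rPar_natural : ∀ {X Y : C} (f : X ⟶ Y),
      f ≫ (D.rPar Y).hom = (D.rPar X).hom ≫ D.parMap f (𝟙 D.bot)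
  par_pentagon : ∀ W X Y Z : C,
      (D.aPar W X (D.par Y Z)).hom ≫ (D.aPar (D.par W X) Y Z).hom =
        D.parMap (𝟙 W) (D.aPar X Y Z).hom ≫ (D.aPar W (D.par X Y) Z).hom ≫
          D.parMap (D.aPar W X Y).hom (𝟙 Z)
  par_triangle : ∀ X Y : C,
      D.parMap (𝟙 X) (D.lPar Y).hom ≫ (D.aPar X D.bot Y).hom = D.parMap (D.rPar X).hom (𝟙 Y)
  dl_natural : ∀ {X X' Y Y' Z Z' : C} (f : X ⟶ X') (g : Y ⟶ Y') (h : Z ⟶ Z'),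
      (f ⊗ₘ D.parMap g h) ≫ D.dl X' Y' Z' = D.dl X Y Z ≫ D.parMap (f ⊗ₘ g) h
  dr_natural : ∀ {X X' Y Y' Z Z' : C} (f : X ⟶ X') (g : Y ⟶ Y') (h : Z ⟶ Z'),
      (D.parMap g h ⊗ₘ f) ≫ D.dr X' Y' Z' = D.dr X Y Z ≫ D.parMap g (h ⊗ₘ f)
  dl_unit : ∀ X Y : C, (X ◁ (D.rPar Y).hom) ≫ D.dl X Y D.bot = (D.rPar (X ⊗ Y)).hom
  dr_unit : ∀ X Y : C, ((D.lPar Y).hom ▷ X) ≫ D.dr X D.bot Y = (D.lPar (Y ⊗ X)).hom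
  dl_tensor_assoc : ∀ W X Y Z : C,
      D.dl (W ⊗ X) Y Z ≫ D.parMap (α_ W X Y).hom (𝟙 Z) =
        (α_ W X (D.par Y Z)).hom ≫ (W ◁ D.dl X Y Z) ≫ D.dl W (X ⊗ Y) Z
  dl_par_assoc : ∀ W X Y Z : C,
      D.dl W X (D.par Y Z) ≫ (D.aPar (W ⊗ X) Y Z).hom =
        (W ◁ (D.aPar X Y Z).hom) ≫ D.dl W (D.par X Y) Z ≫ D.parMap (D.dl W X Y) (𝟙 Z)

open scoped Classical in
/-- Koslowski's par on the category of sets: `A ⊕ B = B` if `A` is empty,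
`A ⊕ B = A` if `B` is empty, and `A ⊕ B = 1` (a singleton) otherwise. -/
noncomputable def kPar (A B : Type u) : Type u :=
  if Nonempty A then (if Nonempty B then PUnit else A) else B

namespace KParProof

def R (A B : Type u) : Sum A B → Sum A B → Prop :=
  fun x y => ∃ a b, x = Sum.inl a ∧ y = Sum.inr b

abbrev Q (A B : Type u) : Type u := Quot (R A B)

abbrev qmk {A B : Type u} (x : Sum A B) : Q A B := Quot.mk _ x

theorem qrel {A B : Type u} (a : A) (b : B) : qmk (.inl a) = qmk (.inr b) :=
  Quot.sound ⟨a, b, rfl, rfl⟩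

theorem qsub {A B : Type u} (h1 : Nonempty A) (h2 : Nonempty B) (x y : Q A B) : x = y := by
  obtain ⟨a0⟩ := h1; obtain ⟨b0⟩ := h2
  have key : ∀ x : Q A B, x = qmk (.inr b0) := by
    refine Quot.ind ?_
    rintro (a | b)
    · exact qrel a b0
    · exact (qrel a0 b).symm.trans (qrel a0 b0)
  rw [key x, key y]

def qmap {A A' B B' : Type u} (f : A → A') (g : B → B') : Q A B → Q A' B' :=
  Quot.map (Sum.map f g) (by rintro _ _ ⟨a, b, rfl, rfl⟩; exact ⟨f a, g b, rfl, rfl⟩)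

@[simp] theorem qmap_inl {A A' B B' : Type u} (f : A → A') (g : B → B') (a : A) :
    qmap f g (qmk (.inl a)) = qmk (.inl (f a)) := rfl

@[simp] theorem qmap_inr {A A' B B' : Type u} (f : A → A') (g : B → B') (b : B) :
    qmap f g (qmk (.inr b)) = qmk (.inr (g b)) := rfl

def qcongr {A A' B B' : Type u} (e1 : A ≃ A') (e2 : B ≃ B') : Q A B ≃ Q A' B' where
  toFun := qmap e1 e2
  invFun := qmap e1.symm e2.symm
  left_inv := by refine Quot.ind ?_; rintro (a | b) <;> simp [qmk] <;> rfl
  right_inv := by refine Quot.ind ?_; rintro (a | b) <;> simp [qmk] <;> rfl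

@[simp] theorem qcongr_apply {A A' B B' : Type u} (e1 : A ≃ A') (e2 : B ≃ B') (q : Q A B) :
    qcongr e1 e2 q = qmap e1 e2 q := rfl

def qassoc (A B C : Type u) : Q A (Q B C) ≃ Q (Q A B) C where
  toFun := Quot.lift
    (fun x => match x with
      | .inl a => qmk (.inl (qmk (.inl a)))
      | .inr q => Quot.lift (fun y => match y with
          | .inl b => qmk (.inl (qmk (.inr b)))
          | .inr c => qmk (.inr c))
          (by rintro _ _ ⟨b, c, rfl, rfl⟩; exact qrel _ _) q)
    (by
      rintro _ _ ⟨a, q, rfl, rfl⟩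
      induction q using Quot.ind with
      | _ y =>
        rcases y with b | c
        · exact congrArg (fun t => qmk (.inl t)) (qrel a b)
        · exact qrel _ _)
  invFun := Quot.lift
    (fun x => match x with
      | .inl q => Quot.lift (fun y => match y with
          | .inl a => qmk (.inl a)
          | .inr b => qmk (.inr (qmk (.inl b))))
          (by rintro _ _ ⟨a, b, rfl, rfl⟩; exact qrel _ _) q
      | .inr c => qmk (.inr (qmk (.inr c))))
    (by
      rintro _ _ ⟨q, c, rfl, rfl⟩
      induction q using Quot.ind with
      | _ y =>
        rcases y with a | b
        · exact qrel _ _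
        · exact congrArg (fun t => qmk (.inr t)) (qrel b c))
  left_inv := by
    refine Quot.ind ?_
    rintro (a | q)
    · rfl
    · induction q using Quot.ind with
      | _ y => rcases y with b | c <;> rfl
  right_inv := by
    refine Quot.ind ?_
    rintro (q | c)
    · induction q using Quot.ind with
      | _ y => rcases y with a | b <;> rfl
    · rfl

@[simp] theorem qassoc_inl {A B C : Type u} (a : A) :
    qassoc A B C (qmk (.inl a)) = qmk (.inl (qmk (.inl a))) := rfl

@[simp] theorem qassoc_inr_inl {A B C : Type u} (b : B) :
    qassoc A B C (qmk (.inr (qmk (.inl b)))) = qmk (.inl (qmk (.inr b))) := rfl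

@[simp] theorem qassoc_inr_inr {A B C : Type u} (c : C) :
    qassoc A B C (qmk (.inr (qmk (.inr c)))) = qmk (.inr c) := rfl

def ql (X : Type u) : X ≃ Q PEmpty X where
  toFun x := qmk (.inr x)
  invFun := Quot.lift (fun y => match y with
    | .inl e => e.elim
    | .inr x => x) (by rintro _ _ ⟨e, _, rfl, rfl⟩; exact e.elim)
  left_inv x := rfl
  right_inv := by refine Quot.ind ?_; rintro (e | x); exacts [e.elim, rfl]

def qr (X : Type u) : X ≃ Q X PEmpty where
  toFun x := qmk (.inl x)
  invFun := Quot.lift (fun y => match y with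
    | .inl x => x
    | .inr e => e.elim) (by rintro _ _ ⟨_, e, rfl, rfl⟩; exact e.elim)
  left_inv x := rfl
  right_inv := by refine Quot.ind ?_; rintro (x | e); exacts [rfl, e.elim]

@[simp] theorem ql_apply (X : Type u) (x : X) : ql X x = qmk (.inr x) := rfl
@[simp] theorem qr_apply (X : Type u) (x : X) : qr X x = qmk (.inl x) := rfl

def qdl (X B C : Type u) : X × Q B C → Q (X × B) C := fun p =>
  Quot.lift (fun s => match s with
    | .inl b => qmk (.inl (p.1, b))
    | .inr c => qmk (.inr c))
    (by rintro _ _ ⟨b, c, rfl, rfl⟩; exact qrel _ _) p.2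

def qdr (X B C : Type u) : Q B C × X → Q B (C × X) := fun p =>
  Quot.lift (fun s => match s with
    | .inl b => qmk (.inl b)
    | .inr c => qmk (.inr (c, p.2)))
    (by rintro _ _ ⟨b, c, rfl, rfl⟩; exact qrel _ _) p.1

@[simp] theorem qdl_inl {X B C : Type u} (x : X) (b : B) :
    qdl X B C (x, qmk (.inl b)) = qmk (.inl (x, b)) := rfl
@[simp] theorem qdl_inr {X B C : Type u} (x : X) (c : C) :
    qdl X B C (x, qmk (.inr c)) = qmk (.inr c) := rfl
@[simp] theorem qdr_inl {X B C : Type u} (x : X) (b : B) :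
    qdr X B C (qmk (.inl b), x) = qmk (.inl b) := rfl
@[simp] theorem qdr_inr {X B C : Type u} (x : X) (c : C) :
    qdr X B C (qmk (.inr c), x) = qmk (.inr (c, x)) := rfl

theorem kPar_pp {A B : Type u} (h1 : Nonempty A) (h2 : Nonempty B) : kPar A B = PUnit := by
  unfold kPar; rw [if_pos h1, if_pos h2]

theorem kPar_pe {A B : Type u} (h1 : Nonempty A) (h2 : ¬ Nonempty B) : kPar A B = A := by
  unfold kPar; rw [if_pos h1, if_neg h2]

theorem kPar_e {A B : Type u} (h1 : ¬ Nonempty A) : kPar A B = B := by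
  unfold kPar; rw [if_neg h1]

noncomputable def qeA {A B : Type u} (h2 : ¬ Nonempty B) : Q A B ≃ A where
  toFun := Quot.lift (fun y => match y with
    | .inl a => a
    | .inr b => (h2 ⟨b⟩).elim)
    (by rintro _ _ ⟨a, b, rfl, rfl⟩; exact (h2 ⟨b⟩).elim)
  invFun a := qmk (.inl a)
  left_inv := by refine Quot.ind ?_; rintro (a | b); exacts [rfl, (h2 ⟨b⟩).elim]
  right_inv a := rfl

noncomputable def qeB {A B : Type u} (h1 : ¬ Nonempty A) : Q A B ≃ B where
  toFun := Quot.lift (fun y => match y with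
    | .inl a => (h1 ⟨a⟩).elim
    | .inr b => b)
    (by rintro _ _ ⟨a, b, rfl, rfl⟩; exact (h1 ⟨a⟩).elim)
  invFun b := qmk (.inr b)
  left_inv := by refine Quot.ind ?_; rintro (a | b); exacts [(h1 ⟨a⟩).elim, rfl]
  right_inv b := rfl

open scoped Classical in
noncomputable def E (A B : Type u) : Q A B ≃ kPar A B :=
  if h1 : Nonempty A then
    if h2 : Nonempty B then
      ({ toFun := fun _ => PUnit.unit
         invFun := fun _ => qmk (.inl h1.some)
         left_inv := fun x => qsub h1 h2 _ _
         right_inv := fun _ => rfl } : Q A B ≃ PUnit).trans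
        (Equiv.cast (kPar_pp h1 h2).symm)
    else (qeA h2).trans (Equiv.cast (kPar_pe h1 h2).symm)
  else (qeB h1).trans (Equiv.cast (kPar_e h1).symm)

noncomputable def D : LDData (Type u) where
  par := kPar
  parMap {X₁ X₂ Y₁ Y₂} f g := ↾fun (k : kPar X₁ Y₁) => E X₂ Y₂ (qmap f g ((E X₁ Y₁).symm k))
  bot := PEmpty
  aPar X Y Z :=
    ((E X (kPar Y Z)).symm.trans
      ((qcongr (Equiv.refl X) (E Y Z).symm).trans
        ((qassoc X Y Z).trans
          ((qcongr (E X Y) (Equiv.refl Z)).trans (E (kPar X Y) Z))))).toIso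
  lPar X := ((ql X).trans (E PEmpty X)).toIso
  rPar X := ((qr X).trans (E X PEmpty)).toIso
  dl X Y Z := ↾fun (p : X × kPar Y Z) => E (X × Y) Z (qdl X Y Z (p.1, (E Y Z).symm p.2))
  dr X Y Z := ↾fun (p : kPar Y Z × X) => E Y (Z × X) (qdr X Y Z ((E Y Z).symm p.1, p.2))

end KParProof

namespace KParProof
end KParProof

open KParProof in
set_option maxHeartbeats 2000000 in
/-- The category of sets with ⊗ the cartesian product and ⊕ the Koslowski par
(with unit the empty set) admits the structure of a linearly distributive
category; in particular there exist natural linear distributions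
`A × (B ⊕ C) → (A × B) ⊕ C` satisfying the linearly distributive coherences. -/
theorem stmt2 :
    ∃ D : LDData (Type u), IsLinDistrib D ∧ D.par = kPar ∧ D.bot = PEmpty := by
  refine ⟨D, ?_, rfl, rfl⟩
  constructor
  · intro X Y; ext k
    obtain ⟨q, rfl⟩ := (E X Y).surjective k
    simp only [D, TypeCat.Fun.toFun_apply, TypeCat.ofHom_apply, types_id_apply, Equiv.symm_apply_apply]
    congr 1
    induction q using Quot.ind with | _ y => rcases y with a | b <;> rfl
  · intro X₁ X₂ X₃ Y₁ Y₂ Y₃ f f' g g'; ext k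
    obtain ⟨q, rfl⟩ := (E X₁ Y₁).surjective k
    simp only [D, TypeCat.Fun.toFun_apply, TypeCat.ofHom_apply, types_comp_apply, Equiv.symm_apply_apply]
    congr 1
    induction q using Quot.ind with | _ y => rcases y with a | b <;> rfl
  · intro X X' Y Y' Z Z' f g h; ext k
    obtain ⟨q, rfl⟩ := (E X (kPar Y Z)).surjective k
    induction q using Quot.ind with | _ s => ?_
    rcases s with x | k
    · simp [D] <;> try rfl
    · obtain ⟨q, rfl⟩ := (E Y Z).surjective k
      induction q using Quot.ind with | _ s => ?_
      rcases s with y | z <;> simp [D] <;> try rfl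
  · intro X Y f; ext x; simp [D] <;> try rfl
  · intro X Y f; ext x; simp [D] <;> try rfl
  · intro W X Y Z; ext k
    obtain ⟨q, rfl⟩ := (E W (kPar X (kPar Y Z))).surjective k
    induction q using Quot.ind with | _ s => ?_
    rcases s with w | k
    · simp [D] <;> try rfl
    · obtain ⟨q, rfl⟩ := (E X (kPar Y Z)).surjective k
      induction q using Quot.ind with | _ s => ?_
      rcases s with x | k
      · simp [D] <;> try rfl
      · obtain ⟨q, rfl⟩ := (E Y Z).surjective k
        induction q using Quot.ind with | _ s => ?_
        rcases s with y | z <;> simp [D] <;> try rfl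
  · intro X Y; ext k
    obtain ⟨q, rfl⟩ := (E X Y).surjective k
    induction q using Quot.ind with | _ s => ?_
    rcases s with x | y <;> simp [D] <;> try rfl
  · intro X X' Y Y' Z Z' f g h; ext p
    obtain ⟨x, k⟩ := p
    obtain ⟨q, rfl⟩ := (E Y Z).surjective k
    induction q using Quot.ind with | _ s => ?_
    rcases s with y | z <;> simp [D, types_tensorObj_def] <;> try rfl
  · intro X X' Y Y' Z Z' f g h; ext p
    obtain ⟨k, x⟩ := p
    obtain ⟨q, rfl⟩ := (E Y Z).surjective k
    induction q using Quot.ind with | _ s => ?_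
    rcases s with y | z <;> simp [D, types_tensorObj_def] <;> try rfl
  · intro X Y; ext p
    obtain ⟨x, y⟩ := p
    simp [D, types_tensorObj_def] <;> try rfl
  · intro X Y; ext p
    obtain ⟨y, x⟩ := p
    simp [D, types_tensorObj_def] <;> try rfl
  · intro W X Y Z; ext p
    obtain ⟨⟨w, x⟩, k⟩ := p
    obtain ⟨q, rfl⟩ := (E Y Z).surjective k
    induction q using Quot.ind with | _ s => ?_
    rcases s with y | z <;> simp [D, types_tensorObj_def] <;> try rfl
  · intro W X Y Z; ext p
    obtain ⟨w, k⟩ := p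
    obtain ⟨q, rfl⟩ := (E X (kPar Y Z)).surjective k
    induction q using Quot.ind with | _ s => ?_
    rcases s with x | k
    · simp [D, types_tensorObj_def] <;> try rfl
    · obtain ⟨q, rfl⟩ := (E Y Z).surjective k
      induction q using Quot.ind with | _ s => ?_
      rcases s with y | z <;> simp [D, types_tensorObj_def] <;> try rfl
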